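/- Let γ : [a,b] → ℝ² be a C² planar curve parametrized by arc length whose curvature κ is continuous, and let s₀ ∈ (a,b) with κ(s₀) > 0. Then there exists δ > 0 such that the restriction of γ to [s₀−δ, s₀+δ] is a convex curve with strictly positive curvature, i.e. its graph is contained in the boundary of a nonempty compact convex subset of ℝ² and κ(s) > 0 for all s ∈ [s₀−δ, s₀+δ]. -/

import Mathlib

open Set Real

/-- The Euclidean norm on `ℝ × ℝ`. -/
noncomputable def pnorm (v : ℝ × ℝ) : ℝ := Real.sqrt (v.1 ^ 2 + v.2 ^ 2)

/-- The open ray emanating from `M` in direction `(cos θ, sin θ)`. -/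
def rayFrom (M : ℝ × ℝ) (θ : ℝ) : Set (ℝ × ℝ) :=
  {p | ∃ r : ℝ, 0 < r ∧ p = M + r • (Real.cos θ, Real.sin θ)}

/-- The `(M,R,d,θ₁,θ₂)`-ring segment. -/
def ringSeg (M : ℝ × ℝ) (R d θ₁ θ₂ : ℝ) : Set (ℝ × ℝ) :=
  {p | ∃ r θ : ℝ, R - d ≤ r ∧ r ≤ R + d ∧ θ₁ ≤ θ ∧ θ ≤ θ₂ ∧
    p = M + r • (Real.cos θ, Real.sin θ)}

/-- The ring segment `R(M,R,d,θ₁,θ₂)` simply covers the set `G` (the graph of a curve):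
every ray with angle `θ ∈ [θ₁,θ₂]` meets `G` in exactly one point, that point lies in the
ring segment, and every point of `G` lies on such a ray. -/
def SimplyCovers (M : ℝ × ℝ) (R d θ₁ θ₂ : ℝ) (G : Set (ℝ × ℝ)) : Prop :=
  (∀ θ ∈ Set.Icc θ₁ θ₂, ∃! p : ℝ × ℝ, p ∈ rayFrom M θ ∩ G) ∧
  (∀ θ ∈ Set.Icc θ₁ θ₂, ∀ p ∈ rayFrom M θ ∩ G, p ∈ ringSeg M R d θ₁ θ₂) ∧
  (∀ p ∈ G, ∃ θ ∈ Set.Icc θ₁ θ₂, p ∈ rayFrom M θ)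

/-- `G` is the graph of a convex curve: it is contained in the boundary of a nonempty
compact convex subset of `ℝ²`. -/
def IsConvexCurveGraph (G : Set (ℝ × ℝ)) : Prop :=
  ∃ K : Set (ℝ × ℝ), K.Nonempty ∧ IsCompact K ∧ Convex ℝ K ∧ G ⊆ frontier K

set_option maxHeartbeats 2000000 in
/-- Let `γ` be a C² arc-length curve with continuous curvature
`κ(s) = ⟨N(s), γ''(s)⟩`, and let `s₀ ∈ (a,b)` with `κ(s₀) > 0`.  Then there is `δ > 0`
such that `[s₀−δ, s₀+δ] ⊆ [a,b]` and the restriction of `γ` to `[s₀−δ, s₀+δ]` is a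
convex curve with strictly positive curvature: its graph is contained in the boundary of
a nonempty compact convex subset of `ℝ²` and `κ(s) > 0` on `[s₀−δ, s₀+δ]`. -/
theorem locally_convex_of_positive_curvature
    (a b : ℝ) (γ γ' γ'' : ℝ → ℝ × ℝ) (φ : ℝ → ℝ)
    (hab : a < b)
    (hγ' : ∀ s ∈ Set.Icc a b, HasDerivAt γ (γ' s) s)
    (hγ'' : ∀ s ∈ Set.Icc a b, HasDerivAt γ' (γ'' s) s)
    (hC2 : ContinuousOn γ'' (Set.Icc a b))
    (htang : ∀ s ∈ Set.Icc a b, γ' s = (Real.sin (φ s), -Real.cos (φ s)))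
    (hκcont : ContinuousOn
      (fun s => Real.cos (φ s) * (γ'' s).1 + Real.sin (φ s) * (γ'' s).2) (Set.Icc a b))
    (s₀ : ℝ) (hs₀ : s₀ ∈ Set.Ioo a b)
    (hκpos : 0 < Real.cos (φ s₀) * (γ'' s₀).1 + Real.sin (φ s₀) * (γ'' s₀).2) :
    ∃ δ > (0:ℝ), Set.Icc (s₀ - δ) (s₀ + δ) ⊆ Set.Icc a b ∧
      IsConvexCurveGraph (γ '' Set.Icc (s₀ - δ) (s₀ + δ)) ∧
      ∀ s ∈ Set.Icc (s₀ - δ) (s₀ + δ),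
        0 < Real.cos (φ s) * (γ'' s).1 + Real.sin (φ s) * (γ'' s).2 := by
  obtain ⟨ha, hb⟩ := hs₀
  set κ : ℝ → ℝ := fun s => Real.cos (φ s) * (γ'' s).1 + Real.sin (φ s) * (γ'' s).2 with hκdef
  have hκAt : ∀ t ∈ Set.Ioo a b, ContinuousAt κ t := fun t ht =>
    (hκcont t (Ioo_subset_Icc_self ht)).continuousAt (Icc_mem_nhds ht.1 ht.2)
  -- Step 1: choose δ₀ > 0 with Icc (s₀-δ₀) (s₀+δ₀) ⊆ Ioo a b and κ > 0 there.
  obtain ⟨δ₀, hδ₀, hI₀sub, hκI₀⟩ :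
      ∃ δ₀ > (0:ℝ), Set.Icc (s₀ - δ₀) (s₀ + δ₀) ⊆ Set.Ioo a b ∧
        ∀ t ∈ Set.Icc (s₀ - δ₀) (s₀ + δ₀), 0 < κ t := by
    have hev : ∀ᶠ t in nhds s₀, 0 < κ t ∧ t ∈ Set.Ioo a b := by
      filter_upwards [(hκAt s₀ ⟨ha, hb⟩).eventually (eventually_gt_nhds hκpos),
        Ioo_mem_nhds ha hb] with t h1 h2 using ⟨h1, h2⟩
    obtain ⟨ε, hε, hball⟩ := Metric.eventually_nhds_iff_ball.1 hev
    have hsub : Set.Icc (s₀ - ε/2) (s₀ + ε/2) ⊆ Metric.ball s₀ ε := by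
      intro t ht
      rw [Metric.mem_ball, Real.dist_eq, abs_lt]
      constructor <;> [linarith [ht.1]; linarith [ht.2]]
    exact ⟨ε/2, by positivity, fun t ht => (hball t (hsub ht)).2,
      fun t ht => (hball t (hsub ht)).1⟩
  have hI₀Icc : Set.Icc (s₀ - δ₀) (s₀ + δ₀) ⊆ Set.Icc a b := hI₀sub.trans Ioo_subset_Icc_self
  have hs₀I₀ : s₀ ∈ Set.Icc (s₀ - δ₀) (s₀ + δ₀) := by
    constructor <;> linarith
  -- Step 2: bound κ on I₀ and choose δ.
  obtain ⟨c, hc, hcmax⟩ := isCompact_Icc.exists_isMaxOn ⟨s₀, hs₀I₀⟩ (hκcont.mono hI₀Icc)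
  set M : ℝ := max (κ c) 1 with hMdef
  have hM1 : (1:ℝ) ≤ M := le_max_right _ _
  have hM0 : (0:ℝ) < M := lt_of_lt_of_le one_pos hM1
  have hMκ : ∀ t ∈ Set.Icc (s₀ - δ₀) (s₀ + δ₀), κ t ≤ M :=
    fun t ht => (hcmax ht).trans (le_max_left _ _)
  set δ : ℝ := min δ₀ (π / (2 * M)) with hδdef
  have hδpos : 0 < δ := lt_min hδ₀ (by positivity)
  set J := Set.Icc (s₀ - δ) (s₀ + δ) with hJdef
  have hδδ₀ : δ ≤ δ₀ := min_le_left _ _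
  have hJI₀ : J ⊆ Set.Icc (s₀ - δ₀) (s₀ + δ₀) :=
    Icc_subset_Icc (by linarith) (by linarith)
  have hJIoo : J ⊆ Set.Ioo a b := hJI₀.trans hI₀sub
  have hJIcc : J ⊆ Set.Icc a b := hJIoo.trans Ioo_subset_Icc_self
  have hs₀ab : s₀ ∈ Set.Icc a b := ⟨ha.le, hb.le⟩
  -- Step 3: angle function ψ.
  set ψ : ℝ → ℝ := fun t => φ s₀ + ∫ u in s₀..t, κ u with hψdef
  have hκint : ∀ t ∈ Set.Ioo a b, IntervalIntegrable κ MeasureTheory.volume s₀ t := by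
    intro t ht
    apply ContinuousOn.intervalIntegrable
    apply hκcont.mono
    exact Set.uIcc_subset_Icc hs₀ab (Ioo_subset_Icc_self ht)
  have hψd : ∀ t ∈ Set.Ioo a b, HasDerivAt ψ (κ t) t := by
    intro t ht
    have hmeas : StronglyMeasurableAtFilter κ (nhds t) MeasureTheory.volume :=
      ContinuousAt.stronglyMeasurableAtFilter isOpen_Ioo hκAt t ht
    exact (intervalIntegral.integral_hasDerivAt_right (hκint t ht) hmeas
      (hκAt t ht)).const_add _
  have hψs₀ : ψ s₀ = φ s₀ := by simp [hψdef]
  -- derivatives of the components of γ'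
  have hfst : ∀ s ∈ Set.Icc a b, HasDerivAt (fun r => (γ' r).1) ((γ'' s).1) s := by
    intro s hsI
    exact (ContinuousLinearMap.fst ℝ ℝ ℝ).hasFDerivAt.comp_hasDerivAt s (hγ'' s hsI)
  have hsnd : ∀ s ∈ Set.Icc a b, HasDerivAt (fun r => (γ' r).2) ((γ'' s).2) s := by
    intro s hsI
    exact (ContinuousLinearMap.snd ℝ ℝ ℝ).hasFDerivAt.comp_hasDerivAt s (hγ'' s hsI)
  -- Step 4: γ'' = κ • N.
  have horto : ∀ t ∈ Set.Ioo a b,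
      Real.sin (φ t) * (γ'' t).1 - Real.cos (φ t) * (γ'' t).2 = 0 := by
    intro t ht
    have htIcc := Ioo_subset_Icc_self ht
    have hsum : HasDerivAt (fun r => (γ' r).1 ^ 2 + (γ' r).2 ^ 2)
        (2 * (γ' t).1 * (γ'' t).1 + 2 * (γ' t).2 * (γ'' t).2) t := by
      have h := ((hfst t htIcc).pow 2).add ((hsnd t htIcc).pow 2)
      refine h.congr_deriv ?_
      simp only [Nat.cast_ofNat, Nat.reduceSub, pow_one]
    have hconst : (fun r => (γ' r).1 ^ 2 + (γ' r).2 ^ 2) =ᶠ[nhds t] fun _ => (1:ℝ) := by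
      filter_upwards [Ioo_mem_nhds ht.1 ht.2] with r hr
      rw [htang r (Ioo_subset_Icc_self hr)]
      simp only
      nlinarith [Real.sin_sq_add_cos_sq (φ r)]
    have hzero : 2 * (γ' t).1 * (γ'' t).1 + 2 * (γ' t).2 * (γ'' t).2 = 0 :=
      hsum.unique (hconst.hasDerivAt_iff.2 (hasDerivAt_const t 1))
    rw [htang t htIcc] at hzero
    simp only at hzero
    linarith
  have hγ''1 : ∀ t ∈ Set.Ioo a b, (γ'' t).1 = κ t * Real.cos (φ t) := by
    intro t ht
    have h := horto t ht
    have hpy := Real.sin_sq_add_cos_sq (φ t)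
    simp only [hκdef]
    linear_combination Real.sin (φ t) * h - (γ'' t).1 * hpy
  have hγ''2 : ∀ t ∈ Set.Ioo a b, (γ'' t).2 = κ t * Real.sin (φ t) := by
    intro t ht
    have h := horto t ht
    have hpy := Real.sin_sq_add_cos_sq (φ t)
    simp only [hκdef]
    linear_combination (-Real.cos (φ t)) * h - (γ'' t).2 * hpy
  -- Step 5: γ' t = (sin ψ t, -cos ψ t) on Ioo a b.
  have htangψ : ∀ t ∈ Set.Ioo a b, γ' t = (Real.sin (ψ t), -Real.cos (ψ t)) := by
    set E : ℝ → ℝ := fun r =>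
      ((γ' r).1 - Real.sin (ψ r)) ^ 2 + ((γ' r).2 + Real.cos (ψ r)) ^ 2 with hEdef
    have hEd : ∀ s ∈ Set.Ioo a b, HasDerivAt E 0 s := by
      intro s hs
      have hsIcc := Ioo_subset_Icc_self hs
      have h1 : HasDerivAt (fun r => (γ' r).1) (κ s * Real.cos (φ s)) s := by
        have := hfst s hsIcc
        rwa [hγ''1 s hs] at this
      have h2 : HasDerivAt (fun r => (γ' r).2) (κ s * Real.sin (φ s)) s := by
        have := hsnd s hsIcc
        rwa [hγ''2 s hs] at this
      have h3 : HasDerivAt (fun r => Real.sin (ψ r)) (Real.cos (ψ s) * κ s) s :=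
        (hψd s hs).sin
      have h4 : HasDerivAt (fun r => Real.cos (ψ r)) (-Real.sin (ψ s) * κ s) s :=
        (hψd s hs).cos
      have h := (((h1.sub h3).pow 2).add ((h2.add h4).pow 2))
      refine h.congr_deriv ?_
      simp only [Pi.sub_apply, Pi.add_apply, Nat.cast_ofNat, Nat.reduceSub, pow_one]
      have hu : (γ' s).1 = Real.sin (φ s) := by rw [htang s hsIcc]
      have hv : (γ' s).2 = -Real.cos (φ s) := by rw [htang s hsIcc]
      rw [hu, hv]
      ring
    have hEcont : ∀ s ∈ Set.Ioo a b, ContinuousAt E s := fun s hs =>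
      (hEd s hs).continuousAt
    have hEs₀ : E s₀ = 0 := by
      simp only [hEdef, hψs₀, htang s₀ hs₀ab]
      ring
    have hEzero : ∀ t ∈ Set.Ioo a b, E t = 0 := by
      intro t ht
      rcases le_total s₀ t with hle | hle
      · have hsub : Set.Icc s₀ t ⊆ Set.Ioo a b := Set.Icc_subset_Ioo ha ht.2
        have := constant_of_has_deriv_right_zero
          (f := E) (a := s₀) (b := t)
          (fun r hr => (hEcont r (hsub hr)).continuousWithinAt)
          (fun r hr => (hEd r (hsub (Set.Ico_subset_Icc_self hr))).hasDerivWithinAt)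
          t ⟨hle, le_refl t⟩
        rw [this, hEs₀]
      · have hsub : Set.Icc t s₀ ⊆ Set.Ioo a b := Set.Icc_subset_Ioo ht.1 hb
        have := constant_of_has_deriv_right_zero
          (f := E) (a := t) (b := s₀)
          (fun r hr => (hEcont r (hsub hr)).continuousWithinAt)
          (fun r hr => (hEd r (hsub (Set.Ico_subset_Icc_self hr))).hasDerivWithinAt)
          s₀ ⟨hle, le_refl s₀⟩
        rw [hEs₀] at this
        nlinarith [sq_nonneg ((γ' t).1 - Real.sin (ψ t)), sq_nonneg ((γ' t).2 + Real.cos (ψ t)),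
          this]
    intro t ht
    have h := hEzero t ht
    simp only [hEdef] at h
    have h1 : (γ' t).1 = Real.sin (ψ t) := by
      nlinarith [sq_nonneg ((γ' t).1 - Real.sin (ψ t)), sq_nonneg ((γ' t).2 + Real.cos (ψ t))]
    have h2 : (γ' t).2 = -Real.cos (ψ t) := by
      nlinarith [sq_nonneg ((γ' t).1 - Real.sin (ψ t)), sq_nonneg ((γ' t).2 + Real.cos (ψ t))]
    exact Prod.ext h1 h2
  -- Step 6: total turning bound on J.
  have hψbound : ∀ s ∈ J, ∀ t ∈ J, s ≤ t → 0 ≤ ψ t - ψ s ∧ ψ t - ψ s ≤ π := by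
    intro s hs t ht hst
    have hsIoo := hJIoo hs
    have htIoo := hJIoo ht
    have hint : IntervalIntegrable κ MeasureTheory.volume s t := by
      apply ContinuousOn.intervalIntegrable
      exact hκcont.mono (Set.uIcc_subset_Icc (hJIcc hs) (hJIcc ht))
    have hdiff : ψ t - ψ s = ∫ u in s..t, κ u := by
      simp only [hψdef]
      rw [add_sub_add_left_eq_sub]
      exact intervalIntegral.integral_interval_sub_left (hκint t htIoo) (hκint s hsIoo)
    constructor
    · rw [hdiff]
      apply intervalIntegral.integral_nonneg hst
      intro u hu
      exact (hκI₀ u (hJI₀ ⟨le_trans hs.1 hu.1, le_trans hu.2 ht.2⟩)).le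
    · rw [hdiff]
      have hle : ∫ u in s..t, κ u ≤ ∫ u in s..t, M := by
        apply intervalIntegral.integral_mono_on hst hint intervalIntegrable_const
        intro u hu
        exact hMκ u (hJI₀ ⟨le_trans hs.1 hu.1, le_trans hu.2 ht.2⟩)
      rw [intervalIntegral.integral_const, smul_eq_mul] at hle
      have h2δ : t - s ≤ 2 * δ := by
        have := hs.1; have := ht.2; linarith
      have hδM : δ ≤ π / (2 * M) := min_le_right _ _
      have hfin : (t - s) * M ≤ π := by
        calc (t - s) * M ≤ (2 * δ) * M := by nlinarith
          _ ≤ (2 * (π / (2 * M))) * M := by nlinarith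
          _ = π := by field_simp
      linarith
  -- Step 7: support inequality.
  have hsupp : ∀ s ∈ J, ∀ t ∈ J,
      Real.cos (ψ s) * (γ s).1 + Real.sin (ψ s) * (γ s).2 ≤
      Real.cos (ψ s) * (γ t).1 + Real.sin (ψ s) * (γ t).2 := by
    intro s hs t ht
    set f : ℝ → ℝ := fun r => Real.cos (ψ s) * (γ r).1 + Real.sin (ψ s) * (γ r).2 with hfdef
    have hfd : ∀ r ∈ Set.Ioo a b, HasDerivAt f (Real.sin (ψ r - ψ s)) r := by
      intro r hr
      have hrIcc := Ioo_subset_Icc_self hr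
      have g1 : HasDerivAt (fun x => (γ x).1) ((γ' r).1) r :=
        (ContinuousLinearMap.fst ℝ ℝ ℝ).hasFDerivAt.comp_hasDerivAt r (hγ' r hrIcc)
      have g2 : HasDerivAt (fun x => (γ x).2) ((γ' r).2) r :=
        (ContinuousLinearMap.snd ℝ ℝ ℝ).hasFDerivAt.comp_hasDerivAt r (hγ' r hrIcc)
      have h := (g1.const_mul (Real.cos (ψ s))).add (g2.const_mul (Real.sin (ψ s)))
      have heq : Real.cos (ψ s) * (γ' r).1 + Real.sin (ψ s) * (γ' r).2
          = Real.sin (ψ r - ψ s) := by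
        rw [htangψ r hr]
        simp only
        rw [Real.sin_sub]
        ring
      rwa [heq] at h
    rcases le_total s t with hst | hts
    · have hmono : MonotoneOn f (Set.Icc s (s₀ + δ)) := by
        apply monotoneOn_of_deriv_nonneg (convex_Icc _ _)
        · intro r hr
          exact (hfd r (hJIoo ⟨le_trans hs.1 hr.1, hr.2⟩)).continuousAt.continuousWithinAt
        · intro r hr
          rw [interior_Icc] at hr
          exact (hfd r (hJIoo ⟨le_trans hs.1 hr.1.le, hr.2.le⟩)).differentiableAt.differentiableWithinAt
        · intro r hr
          rw [interior_Icc] at hr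
          have hrJ : r ∈ J := ⟨le_trans hs.1 hr.1.le, hr.2.le⟩
          rw [(hfd r (hJIoo hrJ)).deriv]
          obtain ⟨h0, hπ⟩ := hψbound s hs r hrJ hr.1.le
          exact Real.sin_nonneg_of_nonneg_of_le_pi h0 hπ
      exact hmono ⟨le_rfl, hs.2⟩ ⟨hst, ht.2⟩ hst
    · have hanti : AntitoneOn f (Set.Icc (s₀ - δ) s) := by
        apply antitoneOn_of_deriv_nonpos (convex_Icc _ _)
        · intro r hr
          exact (hfd r (hJIoo ⟨hr.1, le_trans hr.2 hs.2⟩)).continuousAt.continuousWithinAt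
        · intro r hr
          rw [interior_Icc] at hr
          exact (hfd r (hJIoo ⟨hr.1.le, le_trans hr.2.le hs.2⟩)).differentiableAt.differentiableWithinAt
        · intro r hr
          rw [interior_Icc] at hr
          have hrJ : r ∈ J := ⟨hr.1.le, le_trans hr.2.le hs.2⟩
          rw [(hfd r (hJIoo hrJ)).deriv]
          obtain ⟨h0, hπ⟩ := hψbound r hrJ s hs hr.2.le
          have : ψ r - ψ s = -(ψ s - ψ r) := by ring
          rw [this, Real.sin_neg]
          have := Real.sin_nonneg_of_nonneg_of_le_pi h0 hπ
          linarith
      exact hanti ⟨ht.1, hts⟩ ⟨hs.1, le_rfl⟩ hts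
  -- Step 8: conclusion.
  refine ⟨δ, hδpos, hJIcc, ?_, fun s hs => hκI₀ s (hJI₀ hs)⟩
  have hγcont : ContinuousOn γ J := fun t ht =>
    (hγ' t (hJIcc ht)).continuousAt.continuousWithinAt
  set G := γ '' J with hGdef
  have hGcomp : IsCompact G := isCompact_Icc.image_of_continuousOn hγcont
  set K := closure (convexHull ℝ G) with hKdef
  have hKcomp : IsCompact K :=
    Metric.isCompact_of_isClosed_isBounded isClosed_closure
      ((isBounded_convexHull.2 hGcomp.isBounded).closure)
  refine ⟨K, ?_, hKcomp, (convex_convexHull ℝ G).closure, ?_⟩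
  · have : s₀ ∈ J := by constructor <;> linarith
    exact ⟨γ s₀, subset_closure (subset_convexHull ℝ G ⟨s₀, this, rfl⟩)⟩
  rintro p ⟨s, hs, rfl⟩
  have hmemK : γ s ∈ K := subset_closure (subset_convexHull ℝ G ⟨s, hs, rfl⟩)
  rw [frontier, hKcomp.isClosed.closure_eq]
  refine ⟨hmemK, fun hint => ?_⟩
  obtain ⟨ε, hε, hball⟩ := Metric.isOpen_iff.1 isOpen_interior _ hint
  -- the closed half space
  set H : Set (ℝ × ℝ) := {p : ℝ × ℝ |
    Real.cos (ψ s) * (γ s).1 + Real.sin (ψ s) * (γ s).2 ≤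
    Real.cos (ψ s) * p.1 + Real.sin (ψ s) * p.2} with hHdef
  have hHconv : Convex ℝ H := by
    apply convex_halfSpace_ge
    constructor
    · intro p q
      simp only [Prod.fst_add, Prod.snd_add]
      ring
    · intro r p
      simp only [Prod.smul_fst, Prod.smul_snd, smul_eq_mul]
      ring
  have hHclosed : IsClosed H := by
    apply isClosed_le continuous_const
    exact (continuous_const.mul continuous_fst).add (continuous_const.mul continuous_snd)
  have hKH : K ⊆ H := by
    apply hHclosed.closure_subset_iff.2
    apply convexHull_min _ hHconv
    rintro q ⟨t, ht, rfl⟩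
    exact hsupp s hs t ht
  -- the point just inside
  set q : ℝ × ℝ := γ s - (ε/2) • (Real.cos (ψ s), Real.sin (ψ s)) with hqdef
  have hqball : q ∈ Metric.ball (γ s) ε := by
    rw [Metric.mem_ball, dist_eq_norm, hqdef]
    have : γ s - (ε/2) • (Real.cos (ψ s), Real.sin (ψ s)) - γ s
        = -((ε/2) • (Real.cos (ψ s), Real.sin (ψ s))) := by abel
    rw [this, norm_neg, norm_smul]
    have hn : ‖(Real.cos (ψ s), Real.sin (ψ s))‖ ≤ 1 := by
      rw [Prod.norm_def]
      exact max_le (by rw [Real.norm_eq_abs]; exact Real.abs_cos_le_one _)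
        (by rw [Real.norm_eq_abs]; exact Real.abs_sin_le_one _)
    calc ‖(ε/2 : ℝ)‖ * ‖(Real.cos (ψ s), Real.sin (ψ s))‖
        ≤ ‖(ε/2 : ℝ)‖ * 1 := by
          exact mul_le_mul_of_nonneg_left hn (norm_nonneg _)
      _ = ε/2 := by rw [mul_one, Real.norm_eq_abs, abs_of_pos (by positivity)]
      _ < ε := by linarith
  have hqH : q ∈ H := hKH (interior_subset (hball hqball))
  simp only [hHdef, Set.mem_setOf_eq, hqdef, Prod.fst_sub, Prod.snd_sub, Prod.smul_fst,
    Prod.smul_snd, smul_eq_mul] at hqH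
  nlinarith [Real.sin_sq_add_cos_sq (ψ s), hε]
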